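/- Every induced subgraph of a distance-hereditary graph is distance-hereditary. -/

import Mathlib

open SimpleGraph

/-- The zero forcing closure: `ZFClosure G S v` means vertex `v` eventually becomes blue
when starting from the blue set `S` and repeatedly applying the color-change rule:
a blue vertex with exactly one white neighbor forces that neighbor to become blue. -/
inductive ZFClosure {V : Type*} (G : SimpleGraph V) (S : Set V) : V → Prop
  | init {v : V} : v ∈ S → ZFClosure G S v
  | force {u w : V} : ZFClosure G S u → G.Adj u w →
      (∀ x, G.Adj u x → x ≠ w → ZFClosure G S x) → ZFClosure G S w

/-- `S` is a zero forcing set of `G` if its closure is all of `V`. -/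
def IsZeroForcing {V : Type*} (G : SimpleGraph V) (S : Set V) : Prop :=
  ∀ v, ZFClosure G S v

/-- `z(G;k)`: the number of zero forcing sets of size `k`. -/
noncomputable def zfCount {V : Type*} (G : SimpleGraph V) [Fintype V] (k : ℕ) : ℕ :=
  Nat.card {S : Finset V // S.card = k ∧ IsZeroForcing G ↑S}

/-- `z'(G;k)`: the number of non-forcing `k`-subsets. -/
noncomputable def nfCount {V : Type*} (G : SimpleGraph V) [Fintype V] (k : ℕ) : ℕ :=
  Nat.card {S : Finset V // S.card = k ∧ ¬ IsZeroForcing G ↑S}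

/-- A fort: every vertex outside `F` has `0` or at least `2` neighbors in `F`. -/
def IsFort {V : Type*} (G : SimpleGraph V) (F : Set V) : Prop :=
  ∀ v ∉ F, (∀ w ∈ F, ¬ G.Adj v w) ∨
    ∃ w₁ ∈ F, ∃ w₂ ∈ F, w₁ ≠ w₂ ∧ G.Adj v w₁ ∧ G.Adj v w₂

/-- True twins: adjacent with the same neighbors outside the pair. -/
def TrueTwins {V : Type*} (G : SimpleGraph V) (u v : V) : Prop :=
  G.Adj u v ∧ ∀ w, w ≠ u → w ≠ v → (G.Adj u w ↔ G.Adj v w)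

/-- False twins: distinct, nonadjacent, with the same open neighborhoods. -/
def FalseTwins {V : Type*} (G : SimpleGraph V) (u v : V) : Prop :=
  u ≠ v ∧ ¬ G.Adj u v ∧ ∀ w, G.Adj u w ↔ G.Adj v w

/-- A twin pair: true twins or false twins. -/
def TwinPair {V : Type*} (G : SimpleGraph V) (u v : V) : Prop :=
  TrueTwins G u v ∨ FalseTwins G u v

/-- `G` is path-extremal: the path on the same number of vertices has
coefficientwise at least as many zero forcing sets of every size. -/
noncomputable def PathExtremal {V : Type*} (G : SimpleGraph V) [Fintype V] : Prop :=
  ∀ k : ℕ, zfCount G k ≤ zfCount (SimpleGraph.pathGraph (Fintype.card V)) k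

/-- `BuildDH G A`: the set `A` can be built up from a single vertex by pendant additions,
false-twin additions, and true-twin additions, with respect to the induced subgraph on `A`. -/
inductive BuildDH {V : Type*} (G : SimpleGraph V) : Set V → Prop
  | single (v : V) : BuildDH G {v}
  | pendant {A : Set V} (u v : V) : BuildDH G A → v ∈ A → u ∉ A →
      (∀ w ∈ A, G.Adj u w ↔ w = v) → BuildDH G (insert u A)
  | falseTwin {A : Set V} (u v : V) : BuildDH G A → v ∈ A → u ∉ A →
      ¬ G.Adj u v → (∀ w ∈ A, G.Adj u w ↔ G.Adj v w) → BuildDH G (insert u A)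
  | trueTwin {A : Set V} (u v : V) : BuildDH G A → v ∈ A → u ∉ A →
      G.Adj u v → (∀ w ∈ A, w ≠ v → (G.Adj u w ↔ G.Adj v w)) → BuildDH G (insert u A)

/-- A graph is distance-hereditary if it can be obtained from `K₁` by pendant,
false-twin, and true-twin additions. -/
def DistanceHereditary {V : Type*} (G : SimpleGraph V) : Prop :=
  BuildDH G Set.univ

section Aux

variable {V : Type*} {G : SimpleGraph V}

lemma buildDH_finite {B : Set V} (h : BuildDH G B) : B.Finite := by
  induction h with
  | single v => exact Set.finite_singleton v
  | pendant u v _ _ _ _ ih => exact ih.insert u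
  | falseTwin u v _ _ _ _ _ ih => exact ih.insert u
  | trueTwin u v _ _ _ _ _ ih => exact ih.insert u

/-- Substitution: replace `v ∈ A` by a vertex `z ∉ A` with the same adjacency
to `A \ {v}`. -/
lemma buildDH_subst {B : Set V} (h : BuildDH G B) :
    ∀ v ∈ B, ∀ z ∉ B, (∀ w ∈ B \ {v}, (G.Adj z w ↔ G.Adj v w)) →
      BuildDH G (insert z (B \ {v})) := by
  induction h with
  | single v₀ =>
    intro v hv z hz _
    rw [Set.mem_singleton_iff] at hv
    subst hv
    have : insert z (({v} : Set V) \ {v}) = {z} := by simp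
    rw [this]
    exact BuildDH.single z
  | @pendant A u v' hA hv' hu hcond ih =>
    intro v hv z hz hzadj
    have hzu : z ≠ u := fun h => hz (h ▸ Set.mem_insert u A)
    have hzA : z ∉ A := fun h => hz (Set.mem_insert_of_mem u h)
    rcases Set.mem_insert_iff.mp hv with hveq | hvA
    · -- v = u : rebuild with z in place of u
      subst hveq
      rw [Set.insert_diff_self_of_notMem hu]
      exact BuildDH.pendant z v' hA hv' hzA (fun w hw => by
        rw [hzadj w ⟨Set.mem_insert_of_mem v hw, fun hwu => hu ((Set.mem_singleton_iff.mp hwu) ▸ hw)⟩]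
        exact hcond w hw)
    · have hvu : v ≠ u := fun h => hu (h ▸ hvA)
      rw [Set.insert_diff_of_notMem A (by simpa using hvu.symm),
        Set.insert_comm]
      have hS : BuildDH G (insert z (A \ {v})) :=
        ih v hvA z hzA (fun w hw =>
          hzadj w ⟨Set.mem_insert_of_mem u hw.1, hw.2⟩)
      have hAzu : G.Adj u z ↔ G.Adj u v := by
        rw [G.adj_comm u z, G.adj_comm u v]
        exact hzadj u ⟨Set.mem_insert u A, fun h => hvu (Set.mem_singleton_iff.mp h).symm⟩
      have huS : u ∉ insert z (A \ {v}) := by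
        intro h
        rcases Set.mem_insert_iff.mp h with h | h
        · exact hzu h.symm
        · exact hu h.1
      by_cases hvv' : v = v'
      · -- u was pendant at v; now pendant at z
        subst hvv'
        exact BuildDH.pendant u z hS (Set.mem_insert z _) huS (fun w hw => by
          rcases Set.mem_insert_iff.mp hw with hwz | hw
          · rw [hwz]
            simp only [iff_true]
            exact hAzu.mpr ((hcond v hv').mpr rfl)
          · rw [hcond w hw.1]
            constructor
            · intro h; exact absurd (Set.mem_singleton_iff.mpr h) hw.2
            · intro h; exact absurd (h ▸ hw.1) hzA)
      · have hv'S : v' ∈ insert z (A \ {v}) :=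
          Set.mem_insert_of_mem z ⟨hv', fun h => hvv' (Set.mem_singleton_iff.mp h).symm⟩
        exact BuildDH.pendant u v' hS hv'S huS (fun w hw => by
          rcases Set.mem_insert_iff.mp hw with hwz | hw
          · rw [hwz]
            constructor
            · intro h
              exact absurd ((hcond v hvA).mp (hAzu.mp h)) hvv'
            · intro h; exact absurd (h ▸ hv') hzA
          · exact hcond w hw.1)
  | @falseTwin A u v' hA hv' hu hnadj hcond ih =>
    intro v hv z hz hzadj
    have hzu : z ≠ u := fun h => hz (h ▸ Set.mem_insert u A)
    have hzA : z ∉ A := fun h => hz (Set.mem_insert_of_mem u h)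
    rcases Set.mem_insert_iff.mp hv with hveq | hvA
    · subst hveq
      rw [Set.insert_diff_self_of_notMem hu]
      refine BuildDH.falseTwin z v' hA hv' hzA ?_ ?_
      · intro h
        exact hnadj ((hzadj v' ⟨Set.mem_insert_of_mem v hv',
            fun hh => hu ((Set.mem_singleton_iff.mp hh) ▸ hv')⟩).mp h)
      · intro w hw
        rw [hzadj w ⟨Set.mem_insert_of_mem v hw,
          fun hwu => hu ((Set.mem_singleton_iff.mp hwu) ▸ hw)⟩]
        exact hcond w hw
    · have hvu : v ≠ u := fun h => hu (h ▸ hvA)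
      rw [Set.insert_diff_of_notMem A (by simpa using hvu.symm),
        Set.insert_comm]
      have hS : BuildDH G (insert z (A \ {v})) :=
        ih v hvA z hzA (fun w hw =>
          hzadj w ⟨Set.mem_insert_of_mem u hw.1, hw.2⟩)
      have hAzu : G.Adj u z ↔ G.Adj u v := by
        rw [G.adj_comm u z, G.adj_comm u v]
        exact hzadj u ⟨Set.mem_insert u A, fun h => hvu (Set.mem_singleton_iff.mp h).symm⟩
      have huS : u ∉ insert z (A \ {v}) := by
        intro h
        rcases Set.mem_insert_iff.mp h with h | h
        · exact hzu h.symm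
        · exact hu h.1
      by_cases hvv' : v = v'
      · subst hvv'
        exact BuildDH.falseTwin u z hS (Set.mem_insert z _) huS
          (fun h => hnadj (hAzu.mp h))
          (fun w hw => by
            rcases Set.mem_insert_iff.mp hw with hwz | hw
            · rw [hwz]
              simp only [SimpleGraph.irrefl, iff_false]
              exact fun h => hnadj (hAzu.mp h)
            · rw [hcond w hw.1, ← hzadj w ⟨Set.mem_insert_of_mem u hw.1, hw.2⟩])
      · have hv'S : v' ∈ insert z (A \ {v}) :=
          Set.mem_insert_of_mem z ⟨hv', fun h => hvv' (Set.mem_singleton_iff.mp h).symm⟩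
        exact BuildDH.falseTwin u v' hS hv'S huS hnadj (fun w hw => by
          rcases Set.mem_insert_iff.mp hw with hwz | hw
          · rw [hwz, hAzu, hcond v hvA, G.adj_comm v' v, G.adj_comm v' z,
              hzadj v' ⟨Set.mem_insert_of_mem u hv', fun h => hvv' (Set.mem_singleton_iff.mp h).symm⟩]
          · exact hcond w hw.1)
  | @trueTwin A u v' hA hv' hu hadj hcond ih =>
    intro v hv z hz hzadj
    have hzu : z ≠ u := fun h => hz (h ▸ Set.mem_insert u A)
    have hzA : z ∉ A := fun h => hz (Set.mem_insert_of_mem u h)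
    rcases Set.mem_insert_iff.mp hv with hveq | hvA
    · subst hveq
      rw [Set.insert_diff_self_of_notMem hu]
      exact BuildDH.trueTwin z v' hA hv' hzA
        ((hzadj v' ⟨Set.mem_insert_of_mem v hv',
            fun hh => hu ((Set.mem_singleton_iff.mp hh) ▸ hv')⟩).mpr hadj)
        (fun w hw hwv' => by
          rw [hzadj w ⟨Set.mem_insert_of_mem v hw,
            fun hwu => hu ((Set.mem_singleton_iff.mp hwu) ▸ hw)⟩]
          exact hcond w hw hwv')
    · have hvu : v ≠ u := fun h => hu (h ▸ hvA)
      rw [Set.insert_diff_of_notMem A (by simpa using hvu.symm),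
        Set.insert_comm]
      have hS : BuildDH G (insert z (A \ {v})) :=
        ih v hvA z hzA (fun w hw =>
          hzadj w ⟨Set.mem_insert_of_mem u hw.1, hw.2⟩)
      have hAzu : G.Adj u z ↔ G.Adj u v := by
        rw [G.adj_comm u z, G.adj_comm u v]
        exact hzadj u ⟨Set.mem_insert u A, fun h => hvu (Set.mem_singleton_iff.mp h).symm⟩
      have huS : u ∉ insert z (A \ {v}) := by
        intro h
        rcases Set.mem_insert_iff.mp h with h | h
        · exact hzu h.symm
        · exact hu h.1
      by_cases hvv' : v = v'
      · subst hvv'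
        exact BuildDH.trueTwin u z hS (Set.mem_insert z _) huS (hAzu.mpr hadj)
          (fun w hw hwzne => by
            rcases Set.mem_insert_iff.mp hw with hwz | hw
            · exact absurd hwz hwzne
            · rw [hcond w hw.1 hw.2, ← hzadj w ⟨Set.mem_insert_of_mem u hw.1, hw.2⟩])
      · have hv'S : v' ∈ insert z (A \ {v}) :=
          Set.mem_insert_of_mem z ⟨hv', fun h => hvv' (Set.mem_singleton_iff.mp h).symm⟩
        exact BuildDH.trueTwin u v' hS hv'S huS hadj (fun w hw hwv' => by
          rcases Set.mem_insert_iff.mp hw with hwz | hw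
          · rw [hwz, hAzu, hcond v hvA hvv', G.adj_comm v' v, G.adj_comm v' z,
              hzadj v' ⟨Set.mem_insert_of_mem u hv', fun h => hvv' (Set.mem_singleton_iff.mp h).symm⟩]
          · exact hcond w hw.1 hwv')

/-- Adding an isolated vertex preserves buildability. -/
lemma buildDH_isolated {B : Set V} (h : BuildDH G B) :
    ∀ z ∉ B, (∀ w ∈ B, ¬ G.Adj z w) → BuildDH G (insert z B) := by
  induction h with
  | single v =>
    intro z hz hiso
    have hvz : v ≠ z := fun h => hz (by simp [h])
    have hnadj : ¬ G.Adj v z := fun h => hiso v rfl h.symm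
    have hpair : insert z ({v} : Set V) = insert v {z} := Set.pair_comm z v
    rw [hpair]
    exact BuildDH.falseTwin v z (BuildDH.single z) rfl (by simp [hvz]) hnadj
      (fun w hw => by
        rw [Set.mem_singleton_iff] at hw; subst hw
        simp [hnadj])
  | @pendant A u v hA hv hu hcond ih =>
    intro z hz hiso
    have hzu : z ≠ u := fun h => hz (h ▸ Set.mem_insert u A)
    have hzA : z ∉ A := fun h => hz (Set.mem_insert_of_mem u h)
    rw [Set.insert_comm]
    refine BuildDH.pendant u v
      (ih z hzA (fun w hw => hiso w (Set.mem_insert_of_mem u hw)))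
      (Set.mem_insert_of_mem z hv)
      (fun h => (Set.mem_insert_iff.mp h).elim (fun h => hzu h.symm) hu) ?_
    intro w hw
    rcases Set.mem_insert_iff.mp hw with hwz | hw
    · rw [hwz]
      constructor
      · intro h; exact absurd h.symm (hiso u (Set.mem_insert u A))
      · intro h; exact absurd (h ▸ hv) hzA
    · exact hcond w hw
  | @falseTwin A u v hA hv hu hnadj hcond ih =>
    intro z hz hiso
    have hzu : z ≠ u := fun h => hz (h ▸ Set.mem_insert u A)
    have hzA : z ∉ A := fun h => hz (Set.mem_insert_of_mem u h)
    rw [Set.insert_comm]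
    refine BuildDH.falseTwin u v
      (ih z hzA (fun w hw => hiso w (Set.mem_insert_of_mem u hw)))
      (Set.mem_insert_of_mem z hv)
      (fun h => (Set.mem_insert_iff.mp h).elim (fun h => hzu h.symm) hu)
      hnadj ?_
    intro w hw
    rcases Set.mem_insert_iff.mp hw with hwz | hw
    · rw [hwz]
      constructor
      · intro h; exact absurd h.symm (hiso u (Set.mem_insert u A))
      · intro h; exact absurd h.symm (hiso v (Set.mem_insert_of_mem u hv))
    · exact hcond w hw
  | @trueTwin A u v hA hv hu hadj hcond ih =>
    intro z hz hiso
    have hzu : z ≠ u := fun h => hz (h ▸ Set.mem_insert u A)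
    have hzA : z ∉ A := fun h => hz (Set.mem_insert_of_mem u h)
    rw [Set.insert_comm]
    refine BuildDH.trueTwin u v
      (ih z hzA (fun w hw => hiso w (Set.mem_insert_of_mem u hw)))
      (Set.mem_insert_of_mem z hv)
      (fun h => (Set.mem_insert_iff.mp h).elim (fun h => hzu h.symm) hu)
      hadj ?_
    intro w hw hwv
    rcases Set.mem_insert_iff.mp hw with hwz | hw
    · rw [hwz]
      constructor
      · intro h; exact absurd h.symm (hiso u (Set.mem_insert u A))
      · intro h; exact absurd h.symm (hiso v (Set.mem_insert_of_mem u hv))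
    · exact hcond w hw hwv

/-- Removing one vertex preserves buildability (or the set was a singleton). -/
lemma buildDH_erase {B : Set V} (h : BuildDH G B) :
    ∀ x ∈ B, B = {x} ∨ BuildDH G (B \ {x}) := by
  induction h with
  | single v =>
    intro x hx
    rw [Set.mem_singleton_iff] at hx
    exact Or.inl (by rw [hx])
  | @pendant A u v hA hv hu hcond ih =>
    intro x hx
    right
    rcases Set.mem_insert_iff.mp hx with rfl | hxA
    · rwa [Set.insert_diff_self_of_notMem hu]
    · have hxu : x ≠ u := fun h => hu (h ▸ hxA)
      rw [Set.insert_diff_of_notMem A (by simpa using hxu.symm)]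
      by_cases hxv : x = v
      · subst hxv
        rcases ih x hxA with hsing | hA'
        · rw [hsing]
          simpa using BuildDH.single u
        · refine buildDH_isolated hA' u (fun h => hu h.1) ?_
          intro w hw h
          exact hw.2 ((hcond w hw.1).mp h)
      · rcases ih x hxA with hsing | hA'
        · exact absurd (hsing ▸ hv) (fun h => hxv (Set.mem_singleton_iff.mp h).symm)
        · exact BuildDH.pendant u v hA'
            ⟨hv, fun h => hxv (Set.mem_singleton_iff.mp h).symm⟩
            (fun h => hu h.1) (fun w hw => hcond w hw.1)
  | @falseTwin A u v hA hv hu hnadj hcond ih =>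
    intro x hx
    right
    rcases Set.mem_insert_iff.mp hx with rfl | hxA
    · rwa [Set.insert_diff_self_of_notMem hu]
    · have hxu : x ≠ u := fun h => hu (h ▸ hxA)
      rw [Set.insert_diff_of_notMem A (by simpa using hxu.symm)]
      by_cases hxv : x = v
      · subst hxv
        exact buildDH_subst hA x hxA u hu (fun w hw => hcond w hw.1)
      · rcases ih x hxA with hsing | hA'
        · exact absurd (hsing ▸ hv) (fun h => hxv (Set.mem_singleton_iff.mp h).symm)
        · exact BuildDH.falseTwin u v hA'
            ⟨hv, fun h => hxv (Set.mem_singleton_iff.mp h).symm⟩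
            (fun h => hu h.1) hnadj (fun w hw => hcond w hw.1)
  | @trueTwin A u v hA hv hu hadj hcond ih =>
    intro x hx
    right
    rcases Set.mem_insert_iff.mp hx with rfl | hxA
    · rwa [Set.insert_diff_self_of_notMem hu]
    · have hxu : x ≠ u := fun h => hu (h ▸ hxA)
      rw [Set.insert_diff_of_notMem A (by simpa using hxu.symm)]
      by_cases hxv : x = v
      · subst hxv
        exact buildDH_subst hA x hxA u hu (fun w hw => hcond w hw.1 hw.2)
      · rcases ih x hxA with hsing | hA'
        · exact absurd (hsing ▸ hv) (fun h => hxv (Set.mem_singleton_iff.mp h).symm)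
        · exact BuildDH.trueTwin u v hA'
            ⟨hv, fun h => hxv (Set.mem_singleton_iff.mp h).symm⟩
            (fun h => hu h.1) hadj (fun w hw => hcond w hw.1)

lemma buildDH_subset_aux : ∀ (n : ℕ) (B A : Set V), BuildDH G B → A ⊆ B →
    A.Nonempty → (B \ A).ncard ≤ n → BuildDH G A := by
  intro n
  induction n with
  | zero =>
    intro B A hB hAB hAne hcard
    have hfin : (B \ A).Finite := (buildDH_finite hB).diff (t := A)
    have hempty : B \ A = ∅ := (Set.ncard_eq_zero hfin).mp (Nat.le_zero.mp hcard)
    exact (Set.Subset.antisymm hAB (Set.diff_eq_empty.mp hempty)) ▸ hB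
  | succ n ihn =>
    intro B A hB hAB hAne hcard
    by_cases hBA : B ⊆ A
    · exact (Set.Subset.antisymm hAB hBA) ▸ hB
    · obtain ⟨x, hxB, hxA⟩ := Set.not_subset.mp hBA
      rcases buildDH_erase hB x hxB with hsing | hB'
      · obtain ⟨a, ha⟩ := hAne
        have : a = x := Set.mem_singleton_iff.mp (hsing ▸ hAB ha)
        exact absurd (this ▸ ha) hxA
      · refine ihn (B \ {x}) A hB'
          (fun y hy => Set.mem_diff_singleton.mpr
            ⟨hAB hy, fun h => hxA (h ▸ hy)⟩)
          hAne ?_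
        have hfin : (B \ A).Finite := (buildDH_finite hB).diff (t := A)
        have h1 : (B \ {x}) \ A = (B \ A) \ {x} := Set.diff_diff_comm
        rw [h1, Set.ncard_diff_singleton_of_mem ((Set.mem_diff x).mpr ⟨hxB, hxA⟩)]
        omega

lemma buildDH_preimage {A : Set V} : ∀ {B : Set V}, BuildDH G B → B ⊆ A →
    BuildDH (G.induce A) ((Subtype.val ⁻¹' B : Set A)) := by
  intro B h
  induction h with
  | single v =>
    intro hsub
    have hvA : v ∈ A := hsub rfl
    have : (Subtype.val ⁻¹' ({v} : Set V) : Set A) = {⟨v, hvA⟩} := by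
      ext w; simp [Subtype.ext_iff]
    rw [this]
    exact BuildDH.single _
  | @pendant A' u v hA' hv hu hcond ih =>
    intro hsub
    have huA : u ∈ A := hsub (Set.mem_insert u A')
    have hvA : v ∈ A := hsub (Set.mem_insert_of_mem u hv)
    have hsub' : A' ⊆ A := fun w hw => hsub (Set.mem_insert_of_mem u hw)
    have heq : (Subtype.val ⁻¹' (insert u A') : Set A)
        = insert ⟨u, huA⟩ (Subtype.val ⁻¹' A') := by
      ext w; simp [Subtype.ext_iff]
    rw [heq]
    refine BuildDH.pendant ⟨u, huA⟩ ⟨v, hvA⟩ (ih hsub') hv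
      (fun h => hu h) ?_
    rintro ⟨w, hwA⟩ hw
    simpa [Subtype.ext_iff] using hcond w hw
  | @falseTwin A' u v hA' hv hu hnadj hcond ih =>
    intro hsub
    have huA : u ∈ A := hsub (Set.mem_insert u A')
    have hvA : v ∈ A := hsub (Set.mem_insert_of_mem u hv)
    have hsub' : A' ⊆ A := fun w hw => hsub (Set.mem_insert_of_mem u hw)
    have heq : (Subtype.val ⁻¹' (insert u A') : Set A)
        = insert ⟨u, huA⟩ (Subtype.val ⁻¹' A') := by
      ext w; simp [Subtype.ext_iff]
    rw [heq]
    refine BuildDH.falseTwin ⟨u, huA⟩ ⟨v, hvA⟩ (ih hsub') hv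
      (fun h => hu h) (by simpa using hnadj) ?_
    rintro ⟨w, hwA⟩ hw
    simpa using hcond w hw
  | @trueTwin A' u v hA' hv hu hadj hcond ih =>
    intro hsub
    have huA : u ∈ A := hsub (Set.mem_insert u A')
    have hvA : v ∈ A := hsub (Set.mem_insert_of_mem u hv)
    have hsub' : A' ⊆ A := fun w hw => hsub (Set.mem_insert_of_mem u hw)
    have heq : (Subtype.val ⁻¹' (insert u A') : Set A)
        = insert ⟨u, huA⟩ (Subtype.val ⁻¹' A') := by
      ext w; simp [Subtype.ext_iff]
    rw [heq]
    refine BuildDH.trueTwin ⟨u, huA⟩ ⟨v, hvA⟩ (ih hsub') hv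
      (fun h => hu h) (by simpa using hadj) ?_
    rintro ⟨w, hwA⟩ hw hwv
    have : w ≠ v := fun h => hwv (Subtype.ext h)
    simpa using hcond w hw this

end Aux

/-- Every (nonempty) induced subgraph of a distance-hereditary graph is
distance-hereditary. -/
theorem stmt_10 {V : Type*} (G : SimpleGraph V) (hdh : DistanceHereditary G)
    (A : Set V) (hA : A.Nonempty) :
    DistanceHereditary (G.induce A) := by
  have hBA : BuildDH G A := by
    have hfin : (Set.univ \ A : Set V).Finite := (buildDH_finite hdh).diff (t := A)
    exact buildDH_subset_aux (Set.univ \ A).ncard Set.univ A hdh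
      (Set.subset_univ A) hA le_rfl
  have := buildDH_preimage hBA (le_refl A)
  have heq : (Subtype.val ⁻¹' A : Set A) = Set.univ := by
    ext x; simpa using x.2
  rwa [heq] at this
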